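/- As q → ∞ over prime powers, the Erdős sum F(I_q) = ∑_{n=1}^∞ π'_q(n)/(n·q^n) converges to π²/6. -/

import Mathlib

open Polynomial

/-- The number of monic irreducible polynomials of degree `n` over a finite field `F`. -/
noncomputable def numIrred (F : Type*) [Field F] [Fintype F] (n : ℕ) : ℕ :=
  Nat.card {f : F[X] // f.Monic ∧ Irreducible f ∧ f.natDegree = n}

namespace ErdosAux

variable {F : Type} [Field F] [Fintype F]

lemma dvd_X_pow_card_sub_X (f : F[X]) (hi : Irreducible f) :
    f ∣ X ^ (Fintype.card F ^ f.natDegree) - X := by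
  have hf0 : f ≠ 0 := hi.ne_zero
  haveI : Fact (Irreducible f) := ⟨hi⟩
  set K := AdjoinRoot f
  haveI : Module.Finite F K := PowerBasis.finite (AdjoinRoot.powerBasis hf0)
  haveI : Finite K := Module.finite_of_finite F
  haveI : Fintype K := Fintype.ofFinite K
  have hcard : Fintype.card K = Fintype.card F ^ f.natDegree := by
    rw [Module.card_eq_pow_finrank (K := F) (V := K),
      (AdjoinRoot.powerBasis hf0).finrank, AdjoinRoot.powerBasis_dim]
  have hroot : (AdjoinRoot.root f) ^ (Fintype.card F ^ f.natDegree) = AdjoinRoot.root f := by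
    rw [← hcard]; exact FiniteField.pow_card _
  rw [← AdjoinRoot.mk_eq_zero, map_sub, map_pow, AdjoinRoot.mk_X, hroot, sub_self]

lemma natDegree_le_of_dvd_X_pow_card_sub_X (n : ℕ) (hn : n ≠ 0) (f : F[X]) (hi : Irreducible f)
    (hdvd : f ∣ X ^ (Fintype.card F ^ n) - X) : f.natDegree ≤ n := by
  classical
  set q := Fintype.card F with hq
  have hq1 : 1 < q := Fintype.one_lt_card
  have hf0 : f ≠ 0 := hi.ne_zero
  haveI : Fact (Irreducible f) := ⟨hi⟩
  set K := AdjoinRoot f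
  haveI : Module.Finite F K := PowerBasis.finite (AdjoinRoot.powerBasis hf0)
  haveI : Finite K := Module.finite_of_finite F
  haveI : Fintype K := Fintype.ofFinite K
  have hcard : Fintype.card K = q ^ f.natDegree := by
    rw [Module.card_eq_pow_finrank (K := F) (V := K),
      (AdjoinRoot.powerBasis hf0).finrank, AdjoinRoot.powerBasis_dim]
  obtain ⟨p, hp⟩ := CharP.exists F
  haveI := hp
  haveI hpp : Fact p.Prime := ⟨(CharP.char_is_prime F p)⟩
  obtain ⟨k, hqk⟩ := FiniteField.card F p
  haveI : CharP K p := charP_of_injective_algebraMap (algebraMap F K).injective p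
  have hroot : (AdjoinRoot.root f) ^ (q ^ n) = AdjoinRoot.root f := by
    have := (AdjoinRoot.mk_eq_zero (f := f)).mpr hdvd
    rw [map_sub, map_pow, AdjoinRoot.mk_X, sub_eq_zero] at this
    exact this
  have hall : ∀ x : K, x ^ (q ^ n) = x := by
    have hqpow : q ^ n = p ^ (k.1 * n) := by rw [hq, hqk.2, ← pow_mul]; rfl
    intro x
    have hx : x ∈ Algebra.adjoin F {AdjoinRoot.root f} := by
      rw [AdjoinRoot.adjoinRoot_eq_top]; trivial
    induction hx using Algebra.adjoin_induction with
    | mem y hy => rw [Set.mem_singleton_iff] at hy; rw [hy]; exact hroot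
    | algebraMap a => rw [← map_pow, FiniteField.pow_card_pow]
    | add a b _ _ ha hb => rw [hqpow, add_pow_char_pow, ← hqpow, ha, hb]
    | mul a b _ _ ha hb => rw [mul_pow, ha, hb]
  have hP0 : (X ^ (q ^ n) - X : K[X]) ≠ 0 := FiniteField.X_pow_card_pow_sub_X_ne_zero K hn hq1
  have hsub : Finset.univ ⊆ (X ^ (q ^ n) - X : K[X]).roots.toFinset := by
    intro x _
    rw [Multiset.mem_toFinset, mem_roots hP0]
    simp [hall x]
  have hle : Fintype.card K ≤ q ^ n := by
    calc Fintype.card K = Finset.univ.card := (Finset.card_univ (α := K)).symm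
      _ ≤ (X ^ (q ^ n) - X : K[X]).roots.toFinset.card := Finset.card_le_card hsub
      _ ≤ Multiset.card (X ^ (q ^ n) - X : K[X]).roots := Multiset.toFinset_card_le _
      _ ≤ (X ^ (q ^ n) - X : K[X]).natDegree := (X ^ (q ^ n) - X : K[X]).card_roots'
      _ = q ^ n := FiniteField.X_pow_card_pow_sub_X_natDegree_eq K hn hq1
  rw [hcard] at hle
  exact (Nat.pow_le_pow_iff_right hq1).mp hle

lemma setFinite (d : ℕ) :
    {f : F[X] | f.Monic ∧ Irreducible f ∧ f.natDegree = d}.Finite := by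
  haveI : Finite (degreeLT F (d+1)) :=
    Finite.of_equiv _ (degreeLTEquiv F (d+1)).toEquiv.symm
  apply Set.Finite.subset (Set.toFinite ((degreeLT F (d+1) : Submodule F F[X]) : Set F[X]))
  intro f hf
  simp only [SetLike.mem_coe, mem_degreeLT]
  rcases hf with ⟨hm, _, hdeg⟩
  calc f.degree ≤ f.natDegree := degree_le_natDegree
    _ < (d+1 : ℕ) := by exact_mod_cast Nat.lt_succ_of_le hdeg.le

lemma coprime_of_ne (f g : F[X]) (hf : f.Monic) (hg : g.Monic) (hif : Irreducible f)
    (hig : Irreducible g) (hne : f ≠ g) : IsCoprime f g := by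
  rcases hif.isCoprime_or_dvd g with h | h
  · exact h
  · exact absurd (eq_of_monic_of_associated hf hg (hif.associated_of_dvd hig h)) hne

/-- any finset of distinct monic irreducibles of degree d has d * card ≤ q ^ d -/
lemma key_card_bound (d : ℕ) (hd : d ≠ 0) (s : Finset F[X])
    (h : ∀ f ∈ s, f.Monic ∧ Irreducible f ∧ f.natDegree = d) :
    d * s.card ≤ Fintype.card F ^ d := by
  set q := Fintype.card F with hq
  have hq1 : 1 < q := Fintype.one_lt_card
  have hdvd : (∏ f ∈ s, f) ∣ X ^ (q ^ d) - X := by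
    apply Finset.prod_dvd_of_coprime
    · intro f hf g hg hne
      obtain ⟨hfm, hfi, _⟩ := h f hf
      obtain ⟨hgm, hgi, _⟩ := h g hg
      exact coprime_of_ne f g hfm hgm hfi hgi hne
    · intro f hf
      obtain ⟨hfm, hfi, hfd⟩ := h f hf
      have := dvd_X_pow_card_sub_X f hfi
      rwa [hfd] at this
  have hP0 : (X ^ (q ^ d) - X : F[X]) ≠ 0 := FiniteField.X_pow_card_pow_sub_X_ne_zero F hd hq1
  have hdeg := Polynomial.natDegree_le_of_dvd hdvd hP0
  rw [Polynomial.natDegree_prod _ _ (fun f hf => (h f hf).2.1.ne_zero)] at hdeg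
  rw [Finset.sum_congr rfl (fun f hf => (h f hf).2.2), Finset.sum_const, smul_eq_mul,
    mul_comm] at hdeg
  calc d * s.card ≤ (X ^ (q ^ d) - X : F[X]).natDegree := hdeg
    _ = q ^ d := FiniteField.X_pow_card_pow_sub_X_natDegree_eq F hd hq1

lemma upper (n : ℕ) (hn : n ≠ 0) : n * numIrred F n ≤ Fintype.card F ^ n := by
  classical
  have hfin := setFinite (F := F) n
  have : numIrred F n = hfin.toFinset.card := by
    exact Nat.card_eq_card_finite_toFinset hfin
  rw [this]
  exact key_card_bound n hn hfin.toFinset (by simp [Set.Finite.mem_toFinset] )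


open UniqueFactorizationMonoid in
lemma lower (n : ℕ) (hn : n ≠ 0) :
    Fintype.card F ^ n ≤ n * numIrred F n + ∑ d ∈ Finset.range n, Fintype.card F ^ d := by
  classical
  set q := Fintype.card F with hq
  have hq1 : 1 < q := Fintype.one_lt_card
  have hqn2 : 1 < q ^ n := Nat.one_lt_pow hn hq1
  set P : F[X] := X ^ (q ^ n) - X with hP
  have hP0 : P ≠ 0 := FiniteField.X_pow_card_pow_sub_X_ne_zero F hn hq1
  have hPdeg : P.natDegree = q ^ n := FiniteField.X_pow_card_pow_sub_X_natDegree_eq F hn hq1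
  have hPmonic : P.Monic := by
    have : P = X ^ ((q ^ n - 1) + 1) - X := by rw [Nat.sub_add_cancel hqn2.le]
    rw [this]
    have hdle : (X : F[X]).degree ≤ ((q ^ n - 1 : ℕ) : WithBot ℕ) := by
      refine degree_X_le.trans ?_
      exact_mod_cast Nat.one_le_iff_ne_zero.mpr (by omega)
    exact monic_X_pow_sub (hdle.trans_lt (by exact_mod_cast Nat.lt_succ_self _))
  obtain ⟨p, hp⟩ := CharP.exists F
  haveI := hp
  haveI hpp : Fact p.Prime := ⟨(CharP.char_is_prime F p)⟩
  obtain ⟨k, hqk⟩ := FiniteField.card F p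
  have hsep : Separable P := by
    apply galois_poly_separable p (q ^ n)
    rw [hq, hqk.2, ← pow_mul]
    exact dvd_pow_self p (by positivity)
  have hsq : Squarefree P := hsep.squarefree
  set s : Finset F[X] := (normalizedFactors P).toFinset with hs
  have hnodup : (normalizedFactors P).Nodup :=
    (squarefree_iff_nodup_normalizedFactors hP0).mp hsq
  -- properties of factors
  have hfac : ∀ f ∈ s, f.Monic ∧ Irreducible f ∧ f ∣ P := by
    intro f hf
    rw [hs, Multiset.mem_toFinset] at hf
    have hirr := irreducible_of_normalized_factor f hf
    refine ⟨?_, hirr, dvd_of_mem_normalizedFactors hf⟩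
    have := normalize_normalized_factor f hf
    rw [← this]
    exact monic_normalize hirr.ne_zero
  have hprod : ∏ f ∈ s, f = P := by
    have h1 : (∏ f ∈ s, f) = (normalizedFactors P).prod := by
      rw [hs, Finset.prod_eq_multiset_prod, Multiset.toFinset_val,
        Multiset.dedup_eq_self.mpr hnodup, Multiset.map_id']
    rw [h1]
    refine eq_of_monic_of_associated ?_ hPmonic (prod_normalizedFactors hP0)
    rw [← h1]
    exact monic_prod_of_monic _ _ fun f hf => (hfac f hf).1
  -- degree sum
  have hsum : ∑ f ∈ s, f.natDegree = q ^ n := by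
    rw [← hPdeg, ← hprod, Polynomial.natDegree_prod _ _ fun f hf => (hfac f hf).2.1.ne_zero]
  -- each factor has degree between 1 and n
  have hdegmem : ∀ f ∈ s, f.natDegree ∈ Finset.range (n + 1) := by
    intro f hf
    rw [Finset.mem_range, Nat.lt_succ_iff]
    exact natDegree_le_of_dvd_X_pow_card_sub_X n hn f (hfac f hf).2.1 (hfac f hf).2.2
  -- fiberwise sum
  have hfiber : ∑ f ∈ s, f.natDegree
      = ∑ d ∈ Finset.range (n + 1), ∑ f ∈ s.filter (fun f => f.natDegree = d), f.natDegree :=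
    (Finset.sum_fiberwise_of_maps_to hdegmem _).symm
  -- bound each fiber
  have hfib_small : ∀ d ∈ Finset.range n,
      ∑ f ∈ s.filter (fun f => f.natDegree = d), f.natDegree ≤ q ^ d := by
    intro d hd
    rcases Nat.eq_zero_or_pos d with rfl | hdpos
    · rw [Finset.sum_congr rfl (fun f hf => (Finset.mem_filter.mp hf).2)]
      simp
    · have hbd := key_card_bound d hdpos.ne' (s.filter (fun f => f.natDegree = d))
        (fun f hf => by
          have h1 := Finset.mem_filter.mp hf
          exact ⟨(hfac f h1.1).1, (hfac f h1.1).2.1, h1.2⟩)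
      calc ∑ f ∈ s.filter (fun f => f.natDegree = d), f.natDegree
          = d * (s.filter (fun f => f.natDegree = d)).card := by
            rw [Finset.sum_congr rfl (fun f hf => (Finset.mem_filter.mp hf).2),
              Finset.sum_const, smul_eq_mul, mul_comm]
        _ ≤ q ^ d := hbd
  -- fiber at n bounded by n * numIrred
  have hfib_top : ∑ f ∈ s.filter (fun f => f.natDegree = n), f.natDegree ≤ n * numIrred F n := by
    have hsubset : ↑(s.filter (fun f => f.natDegree = n))
        ⊆ {f : F[X] | f.Monic ∧ Irreducible f ∧ f.natDegree = n} := by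
      intro f hf
      rw [Finset.coe_filter] at hf
      exact ⟨(hfac f hf.1).1, (hfac f hf.1).2.1, hf.2⟩
    have hcard : (s.filter (fun f => f.natDegree = n)).card ≤ numIrred F n := by
      have he : numIrred F n = (setFinite (F := F) n).toFinset.card :=
        Nat.card_eq_card_finite_toFinset (setFinite (F := F) n)
      rw [he]
      apply Finset.card_le_card
      intro f hf
      rw [Set.Finite.mem_toFinset]
      exact hsubset (Finset.mem_coe.mpr hf)
    calc ∑ f ∈ s.filter (fun f => f.natDegree = n), f.natDegree
        = n * (s.filter (fun f => f.natDegree = n)).card := by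
          rw [Finset.sum_congr rfl (fun f hf => (Finset.mem_filter.mp hf).2),
            Finset.sum_const, smul_eq_mul, mul_comm]
      _ ≤ n * numIrred F n := Nat.mul_le_mul_left n hcard
  calc q ^ n = ∑ f ∈ s, f.natDegree := hsum.symm
    _ = ∑ d ∈ Finset.range (n + 1), ∑ f ∈ s.filter (fun f => f.natDegree = d), f.natDegree :=
        hfiber
    _ = (∑ f ∈ s.filter (fun f => f.natDegree = n), f.natDegree)
        + ∑ d ∈ Finset.range n, ∑ f ∈ s.filter (fun f => f.natDegree = d), f.natDegree := by
        rw [Finset.sum_range_succ, add_comm]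
    _ ≤ n * numIrred F n + ∑ d ∈ Finset.range n, q ^ d := by
        exact Nat.add_le_add hfib_top (Finset.sum_le_sum hfib_small)


lemma geom_bound (q : ℕ) (hq : 2 ≤ q) (m : ℕ) (hm : m ≠ 0) :
    ∑ d ∈ Finset.range m, q ^ d ≤ 2 * q ^ (m - 1) := by
  induction m with
  | zero => omega
  | succ k ih =>
    rcases Nat.eq_zero_or_pos k with rfl | hk
    · simp
    · rw [Finset.sum_range_succ]
      have h1 := ih hk.ne'
      have h2 : 2 * q ^ (k - 1) ≤ q ^ k := by
        calc 2 * q ^ (k - 1) ≤ q * q ^ (k - 1) := Nat.mul_le_mul_right _ hq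
          _ = q ^ k := by rw [← pow_succ']; congr 1; omega
      calc ∑ d ∈ Finset.range k, q ^ d + q ^ k ≤ q ^ k + q ^ k := by omega
        _ = 2 * q ^ k := by ring
        _ = 2 * q ^ (k + 1 - 1) := by simp



end ErdosAux

/-- As `q → ∞` over prime powers, the Erdős sum
`F(I_q) = ∑_{n≥1} π'_q(n) / (n qⁿ)` converges to `π²/6`. -/
theorem stmt_2 :
    ∀ ε : ℝ, 0 < ε → ∃ Q : ℕ, ∀ q : ℕ, Q ≤ q → IsPrimePow q →
      ∀ (F : Type) [Field F] [Fintype F], Fintype.card F = q →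
        |(∑' n : ℕ, (numIrred F (n + 1) : ℝ) / ((n + 1) * (q : ℝ) ^ (n + 1))) -
          Real.pi ^ 2 / 6| < ε := by
  intro ε hε
  refine ⟨⌈4 / ε⌉₊ + 1, fun q hQ hpp F _ _ hcard => ?_⟩
  have hq2 : 2 ≤ q := hpp.two_le
  have hqR : (0:ℝ) < q := by positivity
  have hq4 : 4 / ε < q := by
    have h1 : (4 / ε : ℝ) ≤ ⌈4 / ε⌉₊ := Nat.le_ceil _
    have hQ' : ((⌈4 / ε⌉₊ + 1 : ℕ) : ℝ) ≤ (q:ℝ) := by exact_mod_cast hQ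
    push_cast at hQ'
    linarith
  set A : ℕ → ℝ := fun n => (numIrred F (n + 1) : ℝ) / ((n + 1) * (q : ℝ) ^ (n + 1)) with hA
  set b : ℕ → ℝ := fun n => 1 / ((n : ℝ) + 1) ^ 2 with hb
  have hbpos : ∀ n, 0 < b n := fun n => by
    rw [hb]; positivity
  have hAnonneg : ∀ n, 0 ≤ A n := fun n => by
    rw [hA]
    apply div_nonneg (Nat.cast_nonneg _)
    positivity
  have hub : ∀ n, A n ≤ b n := by
    intro n
    have h := ErdosAux.upper (F := F) (n+1) (Nat.succ_ne_zero n)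
    rw [hcard] at h
    have hR : ((n:ℝ)+1) * (numIrred F (n+1) : ℝ) ≤ (q:ℝ)^(n+1) := by exact_mod_cast h
    have h1 : (0:ℝ) < (n:ℝ)+1 := by positivity
    have h2 : (0:ℝ) < (q:ℝ)^(n+1) := by positivity
    rw [hA, hb, div_le_div_iff₀ (by positivity) (by positivity)]
    nlinarith [mul_le_mul_of_nonneg_left hR h1.le]
  have hq2R : (2:ℝ) ≤ (q:ℝ) := by exact_mod_cast hq2
  have hfrac : 0 ≤ 1 - 2/(q:ℝ) := by
    rw [sub_nonneg, div_le_one hqR]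
    exact hq2R
  have hlb : ∀ n, (1 - 2 / (q:ℝ)) * b n ≤ A n := by
    intro n
    have h := ErdosAux.lower (F := F) (n+1) (Nat.succ_ne_zero n)
    rw [hcard] at h
    have hgeo := ErdosAux.geom_bound q hq2 (n+1) (Nat.succ_ne_zero n)
    have hgeo' : ∑ d ∈ Finset.range (n+1), q ^ d ≤ 2 * q ^ n := by simpa using hgeo
    have hnat : q ^ (n+1) ≤ (n+1) * numIrred F (n+1) + 2 * q ^ n := le_trans h (by omega)
    have hR : (q:ℝ) ^ (n+1) ≤ ((n:ℝ)+1) * (numIrred F (n+1) : ℝ) + 2 * (q:ℝ) ^ n := by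
      exact_mod_cast hnat
    have hqm1 : (q:ℝ) ^ n = (q:ℝ)^(n+1) / q := by
      rw [eq_div_iff hqR.ne', ← pow_succ]
    rw [hqm1] at hR
    have hkey : (q:ℝ)^(n+1) * (1 - 2/(q:ℝ)) ≤ ((n:ℝ)+1) * (numIrred F (n+1) : ℝ) := by
      have he : (q:ℝ)^(n+1) * (1 - 2/(q:ℝ)) = (q:ℝ)^(n+1) - 2 * ((q:ℝ)^(n+1) / q) := by
        field_simp
      rw [he]
      linarith
    have h1 : (0:ℝ) < (n:ℝ)+1 := by positivity
    have h2 : (0:ℝ) < (q:ℝ)^(n+1) := by positivity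
    rw [hA, hb, mul_one_div, div_le_div_iff₀ (by positivity) (by positivity)]
    nlinarith [mul_le_mul_of_nonneg_left hkey h1.le]
  -- summability
  have hbsum : Summable b := by
    have := (Real.summable_one_div_nat_pow (p := 2)).mpr one_lt_two
    have h2 := (summable_nat_add_iff (f := fun n : ℕ => 1 / (n:ℝ) ^ 2) 1).mpr this
    apply h2.congr
    intro n
    rw [hb]
    push_cast
    ring_nf
  have hAsum : Summable A := by
    apply Summable.of_nonneg_of_le hAnonneg hub hbsum
  have hbtsum : ∑' n, b n = Real.pi ^ 2 / 6 := by
    have hz := hasSum_zeta_two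
    have h0 := hz.tsum_eq
    have hsummable : Summable (fun n : ℕ => 1 / (n:ℝ) ^ 2) := hz.summable
    rw [Summable.tsum_eq_zero_add hsummable] at h0
    simp only [Nat.cast_zero] at h0
    norm_num at h0
    rw [hb]
    simpa [one_div] using h0
  -- bounds on the tsum
  have htsum_ub : ∑' n, A n ≤ Real.pi ^ 2 / 6 := by
    rw [← hbtsum]
    exact Summable.tsum_le_tsum hub hAsum hbsum
  have htsum_lb : (1 - 2/(q:ℝ)) * (Real.pi ^ 2 / 6) ≤ ∑' n, A n := by
    rw [← hbtsum, ← tsum_mul_left]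
    exact Summable.tsum_le_tsum hlb (hbsum.mul_left _) hAsum
  have hpi : Real.pi ^ 2 / 6 ≤ 2 := by
    nlinarith [Real.pi_lt_d2, Real.pi_pos]
  have hpi0 : 0 < Real.pi ^ 2 / 6 := by positivity
  have h4q : 4 / (q:ℝ) < ε := by
    rw [div_lt_iff₀ hqR]
    rw [div_lt_iff₀ hε] at hq4
    linarith
  have hS2 : (2/(q:ℝ)) * (Real.pi^2/6) ≤ 4 / (q:ℝ) := by
    have h1 : (2/(q:ℝ)) * (Real.pi^2/6) ≤ (2/(q:ℝ)) * 2 :=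
      mul_le_mul_of_nonneg_left hpi (by positivity)
    have h2 : (2/(q:ℝ)) * 2 = 4 / (q:ℝ) := by ring
    linarith
  have hexp : (1 - 2/(q:ℝ)) * (Real.pi^2/6) = Real.pi^2/6 - (2/(q:ℝ)) * (Real.pi^2/6) := by
    ring
  rw [abs_lt]
  constructor
  · linarith [htsum_lb, hS2, h4q, hexp.symm.le, hexp.le]
  · linarith [htsum_ub, hε]
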